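/- Monotone gap: let E_best^t = min{E^1,…,E^t} where E^s = ‖B − f(X̄^s, A)‖₁ is the original objective value of the optimal aggregated solution X̄^s at iteration s, and let F^t be the optimal aggregated objective at iteration t. Under the aggregation assumption and refinement of partitions across iterations, the sequence F^t is nondecreasing, E_best^t is nonincreasing, and hence the gap E_best^t − F^t is nonincreasing in t and always nonnegative. -/

import Mathlib

open Finset

/-- Aggregated data matrix of `A` for the partition `P`. -/
noncomputable def aggMat {n m : ℕ} (P : Finpartition (Finset.univ : Finset (Fin n)))
    (A : Matrix (Fin n) (Fin m) ℝ) : Matrix {S // S ∈ P.parts} (Fin m) ℝ :=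
  fun S j => (∑ i ∈ S.1, A i j) / (S.1.card : ℝ)

/-- Weighted aggregated L1 objective for partition `P` and parameter `X`. -/
noncomputable def aggObj {n m q : ℕ}
    (f : Matrix (Fin m) (Fin q) ℝ → ∀ {ι : Type} [Fintype ι],
      Matrix ι (Fin m) ℝ → Matrix ι (Fin q) ℝ)
    (B : Matrix (Fin n) (Fin q) ℝ) (A : Matrix (Fin n) (Fin m) ℝ)
    (P : Finpartition (Finset.univ : Finset (Fin n)))
    (X : Matrix (Fin m) (Fin q) ℝ) : ℝ :=
  ∑ S : {S // S ∈ P.parts}, (S.1.card : ℝ) *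
    ∑ j, |aggMat P B S j - f X (aggMat P A) S j|

lemma agg_entry {n m q : ℕ}
    (f : Matrix (Fin m) (Fin q) ℝ → ∀ {ι : Type} [Fintype ι],
      Matrix ι (Fin m) ℝ → Matrix ι (Fin q) ℝ)
    (hf : ∀ {ι κ : Type} [Fintype ι] [Fintype κ]
      (X : Matrix (Fin m) (Fin q) ℝ) (W : Matrix κ ι ℝ) (A : Matrix ι (Fin m) ℝ),
      f X (W * A) = W * f X A)
    (A : Matrix (Fin n) (Fin m) ℝ) (P : Finpartition (Finset.univ : Finset (Fin n)))
    (X : Matrix (Fin m) (Fin q) ℝ) (S : {S // S ∈ P.parts}) (j : Fin q) :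
    f X (aggMat P A) S j = (∑ i ∈ S.1, f X A i j) / (S.1.card : ℝ) := by
  set W : Matrix {S // S ∈ P.parts} (Fin n) ℝ :=
    fun S i => if i ∈ S.1 then ((S.1.card : ℝ))⁻¹ else 0 with hW
  have mulW : ∀ {k : ℕ} (M : Matrix (Fin n) (Fin k) ℝ) (T : {S // S ∈ P.parts}) (j' : Fin k),
      (W * M) T j' = (∑ i ∈ T.1, M i j') / (T.1.card : ℝ) := by
    intro k M T j'
    rw [Matrix.mul_apply]
    simp only [hW, ite_mul, zero_mul]
    rw [Finset.sum_ite_mem, Finset.univ_inter, div_eq_mul_inv, Finset.sum_mul]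
    exact Finset.sum_congr rfl fun i _ => mul_comm _ _
  have hA : aggMat P A = W * A := by
    ext T j'; rw [mulW]; rfl
  rw [hA, hf X W A, mulW]

lemma aggObj_eq {n m q : ℕ}
    (f : Matrix (Fin m) (Fin q) ℝ → ∀ {ι : Type} [Fintype ι],
      Matrix ι (Fin m) ℝ → Matrix ι (Fin q) ℝ)
    (hf : ∀ {ι κ : Type} [Fintype ι] [Fintype κ]
      (X : Matrix (Fin m) (Fin q) ℝ) (W : Matrix κ ι ℝ) (A : Matrix ι (Fin m) ℝ),
      f X (W * A) = W * f X A)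
    (B : Matrix (Fin n) (Fin q) ℝ) (A : Matrix (Fin n) (Fin m) ℝ)
    (P : Finpartition (Finset.univ : Finset (Fin n)))
    (X : Matrix (Fin m) (Fin q) ℝ) :
    aggObj f B A P X = ∑ S ∈ P.parts, ∑ j, |∑ i ∈ S, (B i j - f X A i j)| := by
  rw [aggObj, ← Finset.sum_coe_sort P.parts
    (fun S => ∑ j, |∑ i ∈ S, (B i j - f X A i j)|)]
  refine Finset.sum_congr rfl fun S _ => ?_
  have hc : (0 : ℝ) < (S.1.card : ℝ) := by
    exact_mod_cast Finset.card_pos.2 (P.nonempty_of_mem_parts S.2)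
  rw [Finset.mul_sum]
  refine Finset.sum_congr rfl fun j _ => ?_
  rw [agg_entry f hf A P X S j]
  show (S.1.card : ℝ) * |(∑ i ∈ S.1, B i j) / (S.1.card : ℝ) - _| = _
  rw [div_sub_div_same, abs_div, abs_of_pos hc, mul_div_cancel₀ _ (ne_of_gt hc),
    ← Finset.sum_sub_distrib]

lemma sum_parts_eq {n : ℕ} (P : Finpartition (Finset.univ : Finset (Fin n)))
    (g : Fin n → ℝ) : ∑ S ∈ P.parts, ∑ i ∈ S, g i = ∑ i, g i := by
  have h := Finset.sum_biUnion (f := g) P.disjoint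
  simp only [id_eq] at h
  rw [← h, ← Finset.sup_eq_biUnion, P.sup_parts]

lemma cover_eq {n : ℕ} (Pf Pc : Finpartition (Finset.univ : Finset (Fin n)))
    (φ : Finset (Fin n) → Finset (Fin n))
    (hφ : ∀ S ∈ Pf.parts, φ S ∈ Pc.parts ∧ S ⊆ φ S)
    (S' : Finset (Fin n)) (hS' : S' ∈ Pc.parts) (g : Fin n → ℝ) :
    ∑ i ∈ S', g i = ∑ S ∈ Pf.parts.filter (fun S => φ S = S'), ∑ i ∈ S, g i := by
  have hdisj : (↑(Pf.parts.filter (fun S => φ S = S')) : Set (Finset (Fin n))).PairwiseDisjoint id :=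
    Pf.disjoint.subset (fun x hx => (Finset.mem_coe.mp (by exact_mod_cast hx) |> Finset.mem_filter.mp).1)
  have h := Finset.sum_biUnion (f := g) hdisj
  simp only [id_eq] at h
  rw [← h]
  congr 1
  ext i
  simp only [Finset.mem_biUnion, Finset.mem_filter, id]
  constructor
  · rintro hi
    obtain ⟨S, hS, hiS⟩ := Pf.exists_mem (Finset.mem_univ i)
    refine ⟨S, ⟨hS, ?_⟩, hiS⟩
    by_contra hne
    exact Finset.disjoint_left.mp (Pc.disjoint (hφ S hS).1 hS' hne) ((hφ S hS).2 hiS) hi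
  · rintro ⟨S, ⟨hS, hfib⟩, hiS⟩
    exact hfib ▸ (hφ S hS).2 hiS

lemma aggObj_mono {n m q : ℕ}
    (f : Matrix (Fin m) (Fin q) ℝ → ∀ {ι : Type} [Fintype ι],
      Matrix ι (Fin m) ℝ → Matrix ι (Fin q) ℝ)
    (hf : ∀ {ι κ : Type} [Fintype ι] [Fintype κ]
      (X : Matrix (Fin m) (Fin q) ℝ) (W : Matrix κ ι ℝ) (A : Matrix ι (Fin m) ℝ),
      f X (W * A) = W * f X A)
    (B : Matrix (Fin n) (Fin q) ℝ) (A : Matrix (Fin n) (Fin m) ℝ)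
    (Pf Pc : Finpartition (Finset.univ : Finset (Fin n)))
    (h : ∀ S ∈ Pf.parts, ∃ S' ∈ Pc.parts, S ⊆ S')
    (X : Matrix (Fin m) (Fin q) ℝ) :
    aggObj f B A Pc X ≤ aggObj f B A Pf X := by
  choose φ hφ1 hφ2 using h
  classical
  set φ' : Finset (Fin n) → Finset (Fin n) := fun S =>
    if hS : S ∈ Pf.parts then φ S hS else ∅ with hφ'
  have hφ : ∀ S ∈ Pf.parts, φ' S ∈ Pc.parts ∧ S ⊆ φ' S := by
    intro S hS; rw [hφ']; simp only [dif_pos hS]; exact ⟨hφ1 S hS, hφ2 S hS⟩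
  rw [aggObj_eq f hf, aggObj_eq f hf]
  rw [← Finset.sum_fiberwise_of_maps_to (g := φ') (fun S hS => (hφ S hS).1)]
  refine Finset.sum_le_sum fun S' hS' => ?_
  calc ∑ j, |∑ i ∈ S', (B i j - f X A i j)|
      = ∑ j, |∑ S ∈ Pf.parts.filter (fun S => φ' S = S'),
          ∑ i ∈ S, (B i j - f X A i j)| := by
        refine Finset.sum_congr rfl fun j _ => ?_
        rw [cover_eq Pf Pc φ' hφ S' hS']
    _ ≤ ∑ j, ∑ S ∈ Pf.parts.filter (fun S => φ' S = S'),
          |∑ i ∈ S, (B i j - f X A i j)| :=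
        Finset.sum_le_sum fun j _ => Finset.abs_sum_le_sum_abs _ _
    _ = _ := Finset.sum_comm

lemma aggObj_le_full {n m q : ℕ}
    (f : Matrix (Fin m) (Fin q) ℝ → ∀ {ι : Type} [Fintype ι],
      Matrix ι (Fin m) ℝ → Matrix ι (Fin q) ℝ)
    (hf : ∀ {ι κ : Type} [Fintype ι] [Fintype κ]
      (X : Matrix (Fin m) (Fin q) ℝ) (W : Matrix κ ι ℝ) (A : Matrix ι (Fin m) ℝ),
      f X (W * A) = W * f X A)
    (B : Matrix (Fin n) (Fin q) ℝ) (A : Matrix (Fin n) (Fin m) ℝ)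
    (P : Finpartition (Finset.univ : Finset (Fin n)))
    (X : Matrix (Fin m) (Fin q) ℝ) :
    aggObj f B A P X ≤ ∑ i, ∑ j, |B i j - f X A i j| := by
  rw [aggObj_eq f hf, ← sum_parts_eq P (fun i => ∑ j, |B i j - f X A i j|)]
  refine Finset.sum_le_sum fun S _ => ?_
  calc ∑ j, |∑ i ∈ S, (B i j - f X A i j)|
      ≤ ∑ j, ∑ i ∈ S, |B i j - f X A i j| :=
        Finset.sum_le_sum fun j _ => Finset.abs_sum_le_sum_abs _ _
    _ = _ := Finset.sum_comm
/-- Monotone gap of AID: the aggregated optimal values `F^t` are nondecreasing,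
the best original objective values `E_best^t` are nonincreasing, and the gap
`E_best^t − F^t` is nonincreasing and nonnegative. -/
theorem stmt_12 {n m q : ℕ}
    (f : Matrix (Fin m) (Fin q) ℝ → ∀ {ι : Type} [Fintype ι],
      Matrix ι (Fin m) ℝ → Matrix ι (Fin q) ℝ)
    (hf : ∀ {ι κ : Type} [Fintype ι] [Fintype κ]
      (X : Matrix (Fin m) (Fin q) ℝ) (W : Matrix κ ι ℝ) (A : Matrix ι (Fin m) ℝ),
      f X (W * A) = W * f X A)
    (B : Matrix (Fin n) (Fin q) ℝ) (A : Matrix (Fin n) (Fin m) ℝ)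
    (Φ : Set (Matrix (Fin m) (Fin q) ℝ))
    (P : ℕ → Finpartition (Finset.univ : Finset (Fin n)))
    (Xb : ℕ → Matrix (Fin m) (Fin q) ℝ)
    (hXb : ∀ t, Xb t ∈ Φ ∧ ∀ Y ∈ Φ, aggObj f B A (P t) (Xb t) ≤ aggObj f B A (P t) Y)
    (href : ∀ t, ∀ S ∈ (P (t + 1)).parts, ∃ S' ∈ (P t).parts, S ⊆ S')
    (E F Ebest : ℕ → ℝ)
    (hE : ∀ s, E s = ∑ i, ∑ j, |B i j - f (Xb s) A i j|)
    (hF : ∀ t, F t = aggObj f B A (P t) (Xb t))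
    (hEbest : ∀ t, Ebest t = (Finset.range (t + 1)).inf' nonempty_range_add_one E) :
    (∀ t, F t ≤ F (t + 1)) ∧
    (∀ t, Ebest (t + 1) ≤ Ebest t) ∧
    (∀ t, Ebest (t + 1) - F (t + 1) ≤ Ebest t - F t) ∧
    (∀ t, 0 ≤ Ebest t - F t) := by
  have hFE : ∀ t s, F t ≤ E s := by
    intro t s
    rw [hF t, hE s]
    calc aggObj f B A (P t) (Xb t)
        ≤ aggObj f B A (P t) (Xb s) := (hXb t).2 _ (hXb s).1
      _ ≤ _ := aggObj_le_full f hf B A (P t) (Xb s)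
  have hFmono : ∀ t, F t ≤ F (t + 1) := by
    intro t
    rw [hF t, hF (t + 1)]
    calc aggObj f B A (P t) (Xb t)
        ≤ aggObj f B A (P t) (Xb (t + 1)) := (hXb t).2 _ (hXb (t + 1)).1
      _ ≤ aggObj f B A (P (t + 1)) (Xb (t + 1)) :=
          aggObj_mono f hf B A _ _ (href t) _
  have hEbmono : ∀ t, Ebest (t + 1) ≤ Ebest t := by
    intro t
    rw [hEbest t, hEbest (t + 1)]
    refine Finset.le_inf' _ _ fun b hb => Finset.inf'_le _ ?_
    exact Finset.mem_range.mpr (lt_trans (Finset.mem_range.mp hb) (Nat.lt_succ_self _))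
  have hgap : ∀ t, 0 ≤ Ebest t - F t := by
    intro t
    rw [sub_nonneg, hEbest t]
    exact Finset.le_inf' _ _ fun s _ => hFE t s
  exact ⟨hFmono, hEbmono, fun t => sub_le_sub (hEbmono t) (hFmono t), hgap⟩
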